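/- Fundamental Theorem of Affine Normal Play: an affine game G satisfies G ≥ 0 if and only if Left wins G playing second, i.e., if and only if the outcome of G is in L ∪ P. -/

import Mathlib

inductive AGame : Type
  | inf : AGame
  | binf : AGame
  | node : List AGame → List AGame → AGame

namespace AGame

/-- The affine games: option sets are nonempty (hereditarily). -/
inductive Valid : AGame → Prop
  | inf : Valid .inf
  | binf : Valid .binf
  | node : ∀ {L R : List AGame}, L ≠ [] → R ≠ [] →
      (∀ g ∈ L, Valid g) → (∀ g ∈ R, Valid g) → Valid (.node L R)

/-- Total version of the disjunctive sum (value on the undefined cases `∞ + ∞̄` is junk). -/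
def add' : AGame → AGame → AGame
  | .inf, _ => .inf
  | _, .inf => .inf
  | .binf, _ => .binf
  | _, .binf => .binf
  | .node L R, .node L' R' =>
      .node ((L.attach.map fun x => add' x.1 (.node L' R')) ++
             (L'.attach.map fun y => add' (.node L R) y.1))
            ((R.attach.map fun x => add' x.1 (.node L' R')) ++
             (R'.attach.map fun y => add' (.node L R) y.1))
termination_by G H => sizeOf G + sizeOf H
decreasing_by
  all_goals
    simp_wf
    first
      | (have := List.sizeOf_lt_of_mem x.2; simp_all; omega)
      | (have := List.sizeOf_lt_of_mem y.2; simp_all; omega)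

/-- The disjunctive sum, undefined (`none`) exactly when adding `∞` to `∞̄`. -/
def add : AGame → AGame → Option AGame
  | .inf, .binf => none
  | .binf, .inf => none
  | G, H => some (add' G H)

mutual
/-- `o^L(G) = L` : Left, playing first, wins `G`. -/
def lf : AGame → Bool
  | .inf => true
  | .binf => false
  | .node L _ => L.attach.any fun x => ls x.1
termination_by G => sizeOf G
decreasing_by
  simp_wf; have := List.sizeOf_lt_of_mem x.2; simp_all; omega
/-- `o^R(G) = L` : Left, playing second, wins `G`. -/
def ls : AGame → Bool
  | .inf => true
  | .binf => false
  | .node _ R => R.attach.all fun x => lf x.1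
termination_by G => sizeOf G
decreasing_by
  simp_wf; have := List.sizeOf_lt_of_mem x.2; simp_all; omega
end

/-- The combined outcome `(o^L(G), o^R(G))`, encoded as a pair of booleans
(`true` = Left wins). `(true,true)` is 𝓛, `(true,false)` is 𝓝, `(false,true)` is 𝓟,
`(false,false)` is 𝓡. -/
def outcome (G : AGame) : Bool × Bool := (lf G, ls G)

/-- The partial order of outcomes (componentwise, 𝓛 maximal, 𝓡 minimal, 𝓝 ∥ 𝓟). -/
def OutLE (a b : Bool × Bool) : Prop :=
  (a.1 = true → b.1 = true) ∧ (a.2 = true → b.2 = true)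

/-- `G ≥ H` : replacing `H` by `G` never hurts Left in any disjunctive sum. -/
def GE (G H : AGame) : Prop :=
  ∀ X : AGame, Valid X → X ≠ .inf → X ≠ .binf →
    OutLE (outcome (add' H X)) (outcome (add' G X))

/-- Game equivalence. -/
def Equiv (G H : AGame) : Prop :=
  ∀ X : AGame, Valid X → X ≠ .inf → X ≠ .binf →
    outcome (add' G X) = outcome (add' H X)

/-- The zero game `{∞̄ | ∞}`. -/
def zero : AGame := .node [.binf] [.inf]

/-- The conjugate (players switch roles). -/
def neg : AGame → AGame
  | .inf => .binf
  | .binf => .inf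
  | .node L R =>
      .node (R.attach.map fun x => neg x.1) (L.attach.map fun x => neg x.1)
termination_by G => sizeOf G
decreasing_by
  all_goals
    simp_wf
    (have := List.sizeOf_lt_of_mem x.2; simp_all; omega)


/-- Left option set (empty list for the terminating games). -/
def leftOptions : AGame → List AGame
  | .node L _ => L
  | _ => []

/-- Right option set (empty list for the terminating games). -/
def rightOptions : AGame → List AGame
  | .node _ R => R
  | _ => []

/-- A check: a game having `∞` as a Left option or `∞̄` as a Right option. -/
def IsCheck : AGame → Prop
  | .node L R => .inf ∈ L ∨ .binf ∈ R
  | _ => False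

/-- `Follower H G` : `H` is a follower of `G` (i.e. `G` itself, an option of `G`,
an option of an option, and so on). -/
inductive Follower : AGame → AGame → Prop
  | refl (G : AGame) : Follower G G
  | left {H K : AGame} {L R : List AGame} : K ∈ L → Follower H K → Follower H (.node L R)
  | right {H K : AGame} {L R : List AGame} : K ∈ R → Follower H K → Follower H (.node L R)

/-- A Conway form: distinct from `∞` and `∞̄`, with no checks among its followers. -/
def ConwayForm (G : AGame) : Prop :=
  G ≠ .inf ∧ G ≠ .binf ∧ ∀ H, Follower H G → ¬ IsCheck H

/-- A Conway game: a game equivalent to some Conway form. -/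
def ConwayGame (G : AGame) : Prop :=
  ∃ G', Valid G' ∧ ConwayForm G' ∧ Equiv G G'

/-- `J` is invertible: `J + K = 0` (in the sense of game equivalence) for some affine `K`. -/
def Invertible (J : AGame) : Prop :=
  ∃ K, Valid K ∧ ∃ S, add J K = some S ∧ Equiv S zero

/-- Number forms: the images of the surreal-number Conway forms under the embedding
that replaces an empty option set by `{∞̄}` on the Left and by `{∞}` on the Right.
Every genuine Left option is strictly less than every genuine Right option, and
all genuine options are again number forms. -/
inductive NumForm : AGame → Prop
  | mk {L R : List AGame}
      (hL0 : L ≠ []) (hR0 : R ≠ [])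
      (hLb : .binf ∈ L → L = [.binf]) (hRi : .inf ∈ R → R = [.inf])
      (hLnum : ∀ x ∈ L, x ≠ .binf → NumForm x)
      (hRnum : ∀ y ∈ R, y ≠ .inf → NumForm y)
      (hlt : ∀ x ∈ L, ∀ y ∈ R, x ≠ .binf → y ≠ .inf → GE y x ∧ ¬ GE x y) :
      NumForm (.node L R)

/-- A number: an affine game equal to (the image of) a Conway number form. -/
def IsNumber (G : AGame) : Prop := ∃ n, Valid n ∧ NumForm n ∧ Equiv G n

/-- The pathetic tiny `⧾∞ = {0 | {0 | ∞̄}}`. -/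
def tinyInf : AGame := .node [zero] [.node [zero] [.binf]]

/-- The pathetic miny `⧿∞ = {{∞ | 0} | 0}`. -/
def minyInf : AGame := .node [.node [.inf] [zero]] [zero]

end AGame

namespace AGame

private theorem add'_inf_left (X : AGame) : add' .inf X = .inf := by rw [add']

private theorem add'_node_inf (L R : List AGame) : add' (.node L R) .inf = .inf := by
  rw [add'] <;> simp

private theorem add'_node_binf (L R : List AGame) : add' (.node L R) .binf = .binf := by
  rw [add'] <;> simp

private theorem add'_binf_node (L R : List AGame) : add' .binf (.node L R) = .binf := by
  rw [add'] <;> simp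

private theorem add'_inf_node (L R : List AGame) : add' .inf (.node L R) = .inf := by
  rw [add'] <;> simp


private theorem lf_inf : lf .inf = true := by rw [lf]
private theorem ls_inf : ls .inf = true := by rw [ls]
private theorem lf_binf : lf .binf = false := by rw [lf]
private theorem ls_binf : ls .binf = false := by rw [ls]

private theorem lf_node_iff {L R : List AGame} :
    lf (.node L R) = true ↔ ∃ g ∈ L, ls g = true := by rw [lf]; simp

private theorem ls_node_iff {L R : List AGame} :
    ls (.node L R) = true ↔ ∀ g ∈ R, lf g = true := by rw [ls]; simp

private theorem add'_node_node (L R L' R' : List AGame) : add' (.node L R) (.node L' R') =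
      .node ((L.map fun x => add' x (.node L' R')) ++
             (L'.map fun y => add' (.node L R) y))
            ((R.map fun x => add' x (.node L' R')) ++
             (R'.map fun y => add' (.node L R) y)) := by
  rw [add']; simp [List.attach_map_val]

private theorem sizeOf_pos (G : AGame) : 0 < sizeOf G := by cases G <;> simp <;> omega

private theorem main : ∀ n G X, sizeOf G + sizeOf X ≤ n →
    (ls G = true → ls X = true → ls (add' G X) = true) ∧
    (ls G = true → lf X = true → lf (add' G X) = true) ∧
    (lf G = true → ls X = true → lf (add' G X) = true) := by
  intro n
  induction n with
  | zero => intro G X h; have := sizeOf_pos G; omega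
  | succ n ih =>
    intro G X h
    cases G with
    | inf => rw [add'_inf_left]; simp [lf_inf, ls_inf]
    | binf => simp [ls_binf, lf_binf]
    | node L R =>
      cases X with
      | inf => rw [add'_node_inf]; simp [lf_inf, ls_inf]
      | binf => simp [ls_binf, lf_binf]
      | node L' R' =>
        have hsz : ∀ g ∈ R, sizeOf g < sizeOf (AGame.node L R) := by
          intro g hg; have := List.sizeOf_lt_of_mem hg; simp; omega
        have hszL : ∀ g ∈ L, sizeOf g < sizeOf (AGame.node L R) := by
          intro g hg; have := List.sizeOf_lt_of_mem hg; simp; omega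
        have hszR' : ∀ g ∈ R', sizeOf g < sizeOf (AGame.node L' R') := by
          intro g hg; have := List.sizeOf_lt_of_mem hg; simp; omega
        have hszL' : ∀ g ∈ L', sizeOf g < sizeOf (AGame.node L' R') := by
          intro g hg; have := List.sizeOf_lt_of_mem hg; simp; omega
        rw [add'_node_node]
        refine ⟨?_, ?_, ?_⟩
        · intro hG hX
          rw [ls_node_iff]
          intro o ho
          rcases List.mem_append.1 ho with ho | ho
          · obtain ⟨g, hg, rfl⟩ := List.mem_map.1 ho
            have hgl : lf g = true := ls_node_iff.1 hG g hg
            exact (ih g (.node L' R') (by have := hsz g hg; omega)).2.2 hgl hX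
          · obtain ⟨g, hg, rfl⟩ := List.mem_map.1 ho
            have hgl : lf g = true := ls_node_iff.1 hX g hg
            exact (ih (.node L R) g (by have := hszR' g hg; omega)).2.1 hG hgl
        · intro hG hX
          rw [lf_node_iff]
          obtain ⟨g, hg, hgs⟩ := lf_node_iff.1 hX
          refine ⟨add' (.node L R) g, List.mem_append_right _ (List.mem_map_of_mem hg), ?_⟩
          exact (ih (.node L R) g (by have := hszL' g hg; omega)).1 hG hgs
        · intro hG hX
          rw [lf_node_iff]
          obtain ⟨g, hg, hgs⟩ := lf_node_iff.1 hG
          refine ⟨add' g (.node L' R'), List.mem_append_left _ (List.mem_map_of_mem hg), ?_⟩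
          exact (ih g (.node L' R') (by have := hszL g hg; omega)).1 hgs hX

private theorem valid_zero : Valid zero := by
  refine Valid.node (by simp) (by simp) ?_ ?_ <;> intro g hg <;> simp at hg <;> subst hg
  · exact Valid.binf
  · exact Valid.inf

private theorem ls_zero : ls zero = true := by
  rw [zero, ls_node_iff]; intro g hg; simp at hg; subst hg; rw [lf_inf]

private theorem add'_zero_left : ∀ n X, sizeOf X ≤ n →
    (lf (add' zero X) = true ↔ lf X = true) ∧ (ls (add' zero X) = true ↔ ls X = true) := by
  intro n
  induction n with
  | zero => intro X h; have := sizeOf_pos X; omega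
  | succ n ih =>
    intro X h
    cases X with
    | inf => rw [zero, add'_node_inf]; exact ⟨Iff.rfl, Iff.rfl⟩
    | binf => rw [zero, add'_node_binf]; exact ⟨Iff.rfl, Iff.rfl⟩
    | node L' R' =>
      have hszR' : ∀ g ∈ R', sizeOf g < sizeOf (AGame.node L' R') := by
        intro g hg; have := List.sizeOf_lt_of_mem hg; simp; omega
      have hszL' : ∀ g ∈ L', sizeOf g < sizeOf (AGame.node L' R') := by
        intro g hg; have := List.sizeOf_lt_of_mem hg; simp; omega
      rw [zero, add'_node_node]
      constructor
      · rw [lf_node_iff, lf_node_iff]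
        constructor
        · rintro ⟨o, ho, hos⟩
          rcases List.mem_append.1 ho with ho | ho
          · obtain ⟨g, hg, rfl⟩ := List.mem_map.1 ho
            simp at hg; subst hg
            rw [add'_binf_node] at hos
            rw [ls_binf] at hos; exact absurd hos (by simp)
          · obtain ⟨g, hg, rfl⟩ := List.mem_map.1 ho
            refine ⟨g, hg, ?_⟩
            exact ((ih g (by have := hszL' g hg; omega)).2).1 hos
        · rintro ⟨g, hg, hgs⟩
          refine ⟨add' (.node [.binf] [.inf]) g,
            List.mem_append_right _ (List.mem_map_of_mem hg), ?_⟩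
          exact ((ih g (by have := hszL' g hg; omega)).2).2 hgs
      · rw [ls_node_iff, ls_node_iff]
        constructor
        · intro ha g hg
          have := ha (add' (.node [.binf] [.inf]) g)
            (List.mem_append_right _ (List.mem_map_of_mem hg))
          exact ((ih g (by have := hszR' g hg; omega)).1).1 this
        · intro ha o ho
          rcases List.mem_append.1 ho with ho | ho
          · obtain ⟨g, hg, rfl⟩ := List.mem_map.1 ho
            simp at hg; subst hg
            rw [add'_inf_node, lf_inf]
          · obtain ⟨g, hg, rfl⟩ := List.mem_map.1 ho
            exact ((ih g (by have := hszR' g hg; omega)).1).2 (ha g hg)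

private theorem add'_zero_right : ∀ n G, sizeOf G ≤ n →
    (lf (add' G zero) = true ↔ lf G = true) ∧ (ls (add' G zero) = true ↔ ls G = true) := by
  intro n
  induction n with
  | zero => intro G h; have := sizeOf_pos G; omega
  | succ n ih =>
    intro G h
    cases G with
    | inf => rw [add'_inf_left]; exact ⟨Iff.rfl, Iff.rfl⟩
    | binf => rw [zero, add'_binf_node]; exact ⟨Iff.rfl, Iff.rfl⟩
    | node L R =>
      have hszR : ∀ g ∈ R, sizeOf g < sizeOf (AGame.node L R) := by
        intro g hg; have := List.sizeOf_lt_of_mem hg; simp; omega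
      have hszL : ∀ g ∈ L, sizeOf g < sizeOf (AGame.node L R) := by
        intro g hg; have := List.sizeOf_lt_of_mem hg; simp; omega
      rw [zero, add'_node_node]
      constructor
      · rw [lf_node_iff, lf_node_iff]
        constructor
        · rintro ⟨o, ho, hos⟩
          rcases List.mem_append.1 ho with ho | ho
          · obtain ⟨g, hg, rfl⟩ := List.mem_map.1 ho
            refine ⟨g, hg, ?_⟩
            exact ((ih g (by have := hszL g hg; omega)).2).1 hos
          · obtain ⟨g, hg, rfl⟩ := List.mem_map.1 ho
            simp at hg; subst hg
            rw [add'_node_binf] at hos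
            rw [ls_binf] at hos; exact absurd hos (by simp)
        · rintro ⟨g, hg, hgs⟩
          refine ⟨add' g (.node [.binf] [.inf]),
            List.mem_append_left _ (List.mem_map_of_mem hg), ?_⟩
          exact ((ih g (by have := hszL g hg; omega)).2).2 hgs
      · rw [ls_node_iff, ls_node_iff]
        constructor
        · intro ha g hg
          have := ha (add' g (.node [.binf] [.inf]))
            (List.mem_append_left _ (List.mem_map_of_mem hg))
          exact ((ih g (by have := hszR g hg; omega)).1).1 this
        · intro ha o ho
          rcases List.mem_append.1 ho with ho | ho
          · obtain ⟨g, hg, rfl⟩ := List.mem_map.1 ho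
            exact ((ih g (by have := hszR g hg; omega)).1).2 (ha g hg)
          · obtain ⟨g, hg, rfl⟩ := List.mem_map.1 ho
            simp at hg; subst hg
            rw [add'_node_inf, lf_inf]

/-- Fundamental Theorem of Affine Normal Play: `G ≥ 0` if and only if Left
wins `G` playing second (the outcome of `G` is in 𝓛 ∪ 𝓟). -/
theorem ge_zero_iff_leftWinsSecond (G : AGame) (hG : Valid G) :
    GE G zero ↔ ls G = true := by
  constructor
  · intro h
    have hz := h zero valid_zero (by simp [zero]) (by simp [zero])
    have h2 := hz.2
    simp only [outcome] at h2
    have h0 : ls (add' zero zero) = true :=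
      ((add'_zero_left (sizeOf zero) zero le_rfl).2).2 ls_zero
    exact ((add'_zero_right (sizeOf G) G le_rfl).2).1 (h2 h0)
  · intro h X hX hXi hXb
    constructor
    · intro h1
      simp only [outcome] at h1 ⊢
      have hlx : lf X = true := ((add'_zero_left (sizeOf X) X le_rfl).1).1 h1
      exact (main (sizeOf G + sizeOf X) G X le_rfl).2.1 h hlx
    · intro h1
      simp only [outcome] at h1 ⊢
      have hlx : ls X = true := ((add'_zero_left (sizeOf X) X le_rfl).2).1 h1
      exact (main (sizeOf G + sizeOf X) G X le_rfl).1 h hlx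

end AGame
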